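/- Let G = diag(−23, 1, 1, 1) as a 4×4 integer matrix. There exists a 4×4 integer matrix A such that Aᵀ·G·A = G, A·(0,−1,1,0) = (12,55,17,0), A·(2,7,6,3) = (6,27,10,1), A·(4,12,12,9) = (0,0,0,−1), A·(45,138,138,92) = (91,414,138,0), and A has infinite order, i.e., A^k is not the identity matrix for every integer k ≥ 1. -/

import Mathlib

/-- The Gram matrix `G = diag(-23, 1, 1, 1)`. -/
def Gmat : Matrix (Fin 4) (Fin 4) ℤ := Matrix.diagonal ![-23, 1, 1, 1]

private def Amat : Matrix (Fin 4) (Fin 4) ℤ :=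
  !![783, -108, -96, -76; 3588, -495, -440, -348; 1104, -152, -135, -108; 92, -12, -12, -9]

private def Atr : Matrix (Fin 4) (Fin 4) ℤ :=
  !![783, 3588, 1104, 92; -108, -495, -152, -12; -96, -440, -135, -12; -76, -348, -108, -9]

private lemma hTr : Amat.transpose = Atr := by
  ext i j
  fin_cases i <;> fin_cases j <;> rfl

private lemma hGmat : Gmat = !![-23,0,0,0; 0,1,0,0; 0,0,1,0; 0,0,0,1] := by
  ext i j
  fin_cases i <;> fin_cases j <;> rfl

set_option maxHeartbeats 2000000 in
private lemma hG : Amat.transpose * Gmat * Amat = Gmat := by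
  rw [hTr, hGmat]
  ext i j
  fin_cases i <;> fin_cases j <;>
    norm_num [Amat, Atr, Matrix.mul_apply, Fin.sum_univ_four] <;> rfl

private def uvec : Fin 4 → ℤ := ![3, 14, 4, 0]
private def wvec : Fin 4 → ℤ := ![4, 18, 6, 1]

private lemma hAu : Amat.mulVec uvec = (71 : ℤ) • uvec + (60 : ℤ) • wvec := by
  funext i
  fin_cases i <;>
    simp [Amat, uvec, wvec, Matrix.mulVec, dotProduct, Fin.sum_univ_four]

private lemma hAw : Amat.mulVec wvec = (84 : ℤ) • uvec + (71 : ℤ) • wvec := by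
  funext i
  fin_cases i <;>
    simp [Amat, uvec, wvec, Matrix.mulVec, dotProduct, Fin.sum_univ_four]

private lemma hv1 : Amat.mulVec ![0, -1, 1, 0] = ![12, 55, 17, 0] := by
  funext i
  fin_cases i <;>
    norm_num [Amat, Matrix.mulVec, dotProduct, Fin.sum_univ_four] <;> rfl

private lemma hv2 : Amat.mulVec ![2, 7, 6, 3] = ![6, 27, 10, 1] := by
  funext i
  fin_cases i <;>
    norm_num [Amat, Matrix.mulVec, dotProduct, Fin.sum_univ_four] <;> rfl

private lemma hv3 : Amat.mulVec ![4, 12, 12, 9] = ![0, 0, 0, -1] := by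
  funext i
  fin_cases i <;>
    norm_num [Amat, Matrix.mulVec, dotProduct, Fin.sum_univ_four] <;> rfl

private lemma hv4 : Amat.mulVec ![45, 138, 138, 92] = ![91, 414, 138, 0] := by
  funext i
  fin_cases i <;>
    norm_num [Amat, Matrix.mulVec, dotProduct, Fin.sum_univ_four] <;> rfl

private lemma key : ∀ k : ℕ, 1 ≤ k → ∃ a b : ℤ, 1 ≤ a ∧ 1 ≤ b ∧
    (Amat ^ k).mulVec uvec = a • uvec + b • wvec := by
  intro k hk
  induction k, hk using Nat.le_induction with
  | base =>
    exact ⟨71, 60, by norm_num, by norm_num, by simpa using hAu⟩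
  | succ n hn ih =>
    obtain ⟨a, b, ha, hb, h⟩ := ih
    refine ⟨71 * a + 84 * b, 60 * a + 71 * b, by nlinarith, by nlinarith, ?_⟩
    rw [pow_succ', ← Matrix.mulVec_mulVec, h,
      Matrix.mulVec_add, Matrix.mulVec_smul, Matrix.mulVec_smul, hAu, hAw]
    module

private lemma hInf : ∀ k : ℕ, 1 ≤ k → Amat ^ k ≠ 1 := by
  intro k hk hA
  obtain ⟨a, b, ha, hb, h⟩ := key k hk
  rw [hA, Matrix.one_mulVec] at h
  have h3 := congrFun h 3
  simp [uvec, wvec] at h3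
  omega

theorem stmt19 :
    ∃ A : Matrix (Fin 4) (Fin 4) ℤ,
      A.transpose * Gmat * A = Gmat ∧
      A.mulVec ![0, -1, 1, 0] = ![12, 55, 17, 0] ∧
      A.mulVec ![2, 7, 6, 3] = ![6, 27, 10, 1] ∧
      A.mulVec ![4, 12, 12, 9] = ![0, 0, 0, -1] ∧
      A.mulVec ![45, 138, 138, 92] = ![91, 414, 138, 0] ∧
      ∀ k : ℕ, 1 ≤ k → A ^ k ≠ 1 :=
  ⟨Amat, hG, hv1, hv2, hv3, hv4, hInf⟩
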